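/- Let B = Σ_{n=0}^{M} b_n(x)Λⁿ be a matrix difference operator with only nonnegative powers of Λ, and let f, g : ℝ → M_N(ℂ). Then the negative part of the composed operator f ∘ Γ ∘ g ∘ B equals f ∘ Γ ∘ B*(g), where B*(g) : ℝ → M_N(ℂ) is the function B*(g)(x) = Σ_{n=0}^{M} g(x−nε) b_n(x−nε). Equivalently, for every m ≥ 1 the coefficient of Λ^{−m} in f ∘ Γ ∘ g ∘ B equals f(x) · B*(g)(x−mε). -/

import Mathlib

open Matrix

noncomputable section

/-- `N × N` complex matrices. -/
abbrev Mat (N : ℕ) := Matrix (Fin N) (Fin N) ℂ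

/-- A formal matrix difference operator `A = Σₖ aₖ(x) Λᵏ`, represented by its
family of coefficient functions: `A k x` is the coefficient of `Λᵏ` at the
point `x`.  `Λ` is the shift `(Λ g)(x) = g(x + ε)`. -/
abbrev DOp (N : ℕ) := ℤ → ℝ → Mat N

/-- Product of difference operators, determined by
`(a(x)Λⁱ)·(b(x)Λʲ) = a(x) b(x+iε) Λ^{i+j}`; the coefficient of `Λᵏ` in `A·B`
is `Σᶠ i, A i (x) * B (k−i) (x+iε)` (a finite sum in all cases considered). -/
noncomputable def opMul (ε : ℝ) {N : ℕ} (A B : DOp N) : DOp N :=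
  fun k x => ∑ᶠ i : ℤ, A i x * B (k - i) (x + (i : ℝ) * ε)

/-- A function `f : ℝ → Mat N`, viewed as the degree-zero operator `f(x)Λ⁰`. -/
def ofFun {N : ℕ} (f : ℝ → Mat N) : DOp N := fun k x => if k = 0 then f x else 0

/-- The negative part `A₋ = Σ_{k<0} aₖ Λᵏ`. -/
def opNegPart {N : ℕ} (A : DOp N) : DOp N := fun k x => if k < 0 then A k x else 0

/-- The nonnegative part `A₊ = Σ_{k≥0} aₖ Λᵏ`. -/
def opPosPart {N : ℕ} (A : DOp N) : DOp N := fun k x => if 0 ≤ k then A k x else 0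

/-!
STATEMENT 3: for a matrix difference operator `B = Σ_{n=0}^{M} bₙ(x)Λⁿ` with only
nonnegative powers of `Λ` and functions `f, g : ℝ → Mat N`, the negative part of
`f ∘ Γ ∘ g ∘ B` equals `f ∘ Γ ∘ B*(g)`, where `Γ = Σ_{s≥1} Λ⁻ˢ` and
`B*(g)(x) = Σ_{n=0}^{M} g(x−nε) bₙ(x−nε)`; equivalently, for every `m ≥ 1` the
coefficient of `Λ^{−m}` in `f ∘ Γ ∘ g ∘ B` equals `f(x) · B*(g)(x−mε)`.
-/

lemma mul_ofFun (ε : ℝ) {N : ℕ} (A : DOp N) (h : ℝ → Mat N) (k : ℤ) (x : ℝ) :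
    opMul ε A (ofFun h) k x = A k x * h (x + (k : ℝ) * ε) := by
  unfold opMul
  rw [finsum_eq_single _ k]
  · simp [ofFun]
  · intro i hi
    have : k - i ≠ 0 := sub_ne_zero.mpr (Ne.symm hi)
    simp [ofFun, this]

lemma ofFun_mul (ε : ℝ) {N : ℕ} (A : DOp N) (h : ℝ → Mat N) (k : ℤ) (x : ℝ) :
    opMul ε (ofFun h) A k x = h x * A k x := by
  unfold opMul
  rw [finsum_eq_single _ 0]
  · simp [ofFun]
  · intro i hi; simp [ofFun, hi]

theorem negPart_f_Gamma_g_B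
    (ε : ℝ) (hε : 0 < ε) (N : ℕ) (hN : 1 ≤ N) (M : ℕ)
    (b : ℕ → ℝ → Mat N) (f g : ℝ → Mat N) :
    let B : DOp N := fun k x => if 0 ≤ k ∧ k ≤ (M : ℤ) then b k.toNat x else 0
    let Gam : DOp N := fun k _ => if k < 0 then 1 else 0
    let Bstarg : ℝ → Mat N := fun x =>
      ∑ n ∈ Finset.range (M + 1), g (x - (n : ℝ) * ε) * b n (x - (n : ℝ) * ε)
    opNegPart (opMul ε (opMul ε (opMul ε (ofFun f) Gam) (ofFun g)) B)
        = opMul ε (opMul ε (ofFun f) Gam) (ofFun Bstarg)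
      ∧ ∀ m : ℤ, 1 ≤ m → ∀ x : ℝ,
        opMul ε (opMul ε (opMul ε (ofFun f) Gam) (ofFun g)) B (-m) x
          = f x * Bstarg (x - (m : ℝ) * ε) := by
  intro B Gam Bstarg
  have hA1 : ∀ (k : ℤ) (x : ℝ), opMul ε (ofFun f) Gam k x
      = if k < 0 then f x else 0 := by
    intro k x; rw [ofFun_mul]; by_cases h : k < 0 <;> simp [Gam, h]
  have hA2 : ∀ (k : ℤ) (x : ℝ), opMul ε (opMul ε (ofFun f) Gam) (ofFun g) k x
      = if k < 0 then f x * g (x + (k : ℝ) * ε) else 0 := by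
    intro k x; rw [mul_ofFun, hA1]; by_cases h : k < 0 <;> simp [h]
  have key : ∀ m : ℤ, 1 ≤ m → ∀ x : ℝ,
      opMul ε (opMul ε (opMul ε (ofFun f) Gam) (ofFun g)) B (-m) x
        = f x * Bstarg (x - (m : ℝ) * ε) := by
    intro m hm x
    show (∑ᶠ i : ℤ, opMul ε (opMul ε (ofFun f) Gam) (ofFun g) i x
        * B (-m - i) (x + (i : ℝ) * ε)) = _
    set s : Finset ℤ := (Finset.range (M + 1)).image (fun n : ℕ => -m - (n : ℤ))
      with hs
    rw [finsum_eq_finset_sum_of_support_subset _ (s := s)]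
    · rw [hs, Finset.sum_image (by intro a _ c _ h; have h' : -m - (a:ℤ) = -m - (c:ℤ) := h; omega)]
      simp only [Bstarg, Finset.mul_sum]
      refine Finset.sum_congr rfl ?_
      intro n hn
      simp only [Finset.mem_range] at hn
      have h1 : -m - (n : ℤ) < 0 := by omega
      have h2 : (0 : ℤ) ≤ -m - (-m - (n : ℤ)) ∧ -m - (-m - (n : ℤ)) ≤ (M : ℤ) := by
        constructor <;> omega
      rw [hA2]
      simp only [h1, if_pos]
      have h3 : -m - (-m - (n : ℤ)) = (n : ℤ) := by ring
      simp only [B, h3]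
      rw [if_pos (show (0:ℤ) ≤ (n:ℤ) ∧ (n:ℤ) ≤ (M:ℤ) from ⟨by omega, by omega⟩),
        Int.toNat_natCast]
      have h4 : x + ((-m - (n : ℤ) : ℤ) : ℝ) * ε = x - (m : ℝ) * ε - (n : ℝ) * ε := by
        push_cast; ring
      rw [h4, mul_assoc]
    · intro i hi
      simp only [Function.mem_support] at hi
      by_contra hmem
      have hB : ¬ ((0 : ℤ) ≤ -m - i ∧ -m - i ≤ (M : ℤ)) := by
        intro hc
        exact hmem (Finset.mem_coe.mpr (Finset.mem_image.mpr
          ⟨(-m - i).toNat, Finset.mem_range.mpr (by omega), by omega⟩))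
      apply hi
      simp only [B, hB, if_neg, not_false_iff, mul_zero]
  refine ⟨?_, key⟩
  funext k x
  by_cases hk : k < 0
  · have hm : 1 ≤ -k := by omega
    have := key (-k) hm x
    rw [neg_neg] at this
    simp only [opNegPart, hk, if_pos, this, mul_ofFun, hA1]
    have : x + (k : ℝ) * ε = x - ((-k : ℤ) : ℝ) * ε := by push_cast; ring
    rw [← this]
  · simp only [opNegPart, hk, if_neg, not_false_iff, mul_ofFun, hA1]
    simp [hk]
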